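/- arXiv:2404.02825 — 2 statements merged into one kernel-verified Lean document; each statement's English description precedes it below -/
import Mathlib

section
/- Let p, γ > 0 and define π_D = (√γ/2)(1 - 2√γ p + √(1 + 4γp²)) and π_O = √γ - π_D. Then the 2×2 matrix Π with diagonal entries π_D and off-diagonal entries π_O is symmetric positive definite and satisfies the continuous-time algebraic Riccati equation 2ÃΠ - (1/γ)Π² + I = 0, where Ã is the 2×2 matrix with diagonal entries -p and off-diagonal entries p. -/
open Matrix Real

set_option maxHeartbeats 1000000 in
private lemma riccati_aux (p γ : ℝ) (hγ : 0 < γ) (πD πO : ℝ)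
    (key1 : πD ^ 2 + πO ^ 2 = γ * (1 + 2 * p * (πO - πD)))
    (key2' : 2 * (πD * πO) = γ * (2 * p * (πD - πO))) :
    (2 : ℝ) • ((!![-p, p; p, -p] : Matrix (Fin 2) (Fin 2) ℝ) * !![πD, πO; πO, πD])
      - γ⁻¹ • (!![πD, πO; πO, πD] * !![πD, πO; πO, πD]) + 1 = 0 := by
  have hγ' : γ ≠ 0 := hγ.ne'
  ext i j
  fin_cases i <;> fin_cases j <;>
    simp [Matrix.mul_apply, Fin.sum_univ_two, Matrix.one_apply] <;>
    field_simp <;>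
    first
      | linear_combination -key1
      | linear_combination -key2'

set_option maxHeartbeats 1000000 in
theorem stmt0 (p γ : ℝ) (hp : 0 < p) (hγ : 0 < γ)
    (πD πO : ℝ)
    (hπD : πD = (Real.sqrt γ / 2) * (1 - 2 * Real.sqrt γ * p + Real.sqrt (1 + 4 * γ * p ^ 2)))
    (hπO : πO = Real.sqrt γ - πD)
    (Pi : Matrix (Fin 2) (Fin 2) ℝ) (hPi : Pi = !![πD, πO; πO, πD])
    (Atil : Matrix (Fin 2) (Fin 2) ℝ) (hA : Atil = !![-p, p; p, -p]) :
    Pi.IsSymm ∧ Pi.PosDef ∧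
      (2 : ℝ) • (Atil * Pi) - γ⁻¹ • (Pi * Pi) + 1 = 0 := by
  set s := Real.sqrt γ with hsdef
  set r := Real.sqrt (1 + 4 * γ * p ^ 2) with hrdef
  have hγ' : γ ≠ 0 := hγ.ne'
  have hs : 0 < s := Real.sqrt_pos.mpr hγ
  have hs2 : s ^ 2 = γ := Real.sq_sqrt hγ.le
  have hr0 : 0 ≤ r := Real.sqrt_nonneg _
  have hr2 : r ^ 2 = 1 + 4 * γ * p ^ 2 := Real.sq_sqrt (by positivity)
  have hr2' : r ^ 2 = 1 + 4 * s ^ 2 * p ^ 2 := by rw [hr2, hs2]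
  have hrgt : 2 * s * p < r := by
    nlinarith [sq_nonneg (r - 2 * s * p), sq_nonneg (r + 2 * s * p), mul_pos hs hp]
  have hv : πD - πO = s * (r - 2 * s * p) := by rw [hπO, hπD]; ring
  have hB : 0 < πD - πO := by
    rw [hv]; exact mul_pos hs (by linarith)
  have hsum : πD + πO = s := by rw [hπO]; ring
  have key1 : πD ^ 2 + πO ^ 2 = γ * (1 + 2 * p * (πO - πD)) := by
    rw [← hs2, hπO, hπD]
    linear_combination (s ^ 2 / 2) * hr2'
  have key2' : 2 * (πD * πO) = γ * (2 * p * (πD - πO)) := by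
    rw [← hs2, hπO, hπD]
    linear_combination (-(s ^ 2) / 2) * hr2'
  refine ⟨?_, ?_, ?_⟩
  · rw [hPi, Matrix.IsSymm]
    ext i j
    fin_cases i <;> fin_cases j <;> simp
  · constructor
    · rw [hPi, Matrix.IsHermitian]
      ext i j
      fin_cases i <;> fin_cases j <;> simp
    · intro x hx
      have hne : x 0 ≠ 0 ∨ x 1 ≠ 0 := by
        by_contra h
        push_neg at h
        exact hx (by ext i; fin_cases i <;> simp [h.1, h.2])
      have hx2 : 0 < x 0 ^ 2 + x 1 ^ 2 := by
        rcases hne with h | h <;>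
          nlinarith [sq_nonneg (x 0), sq_nonneg (x 1), mul_self_pos.mpr h]
      have hDO : 0 < πD + πO := hsum ▸ hs
      have hcase : 0 < (x 0 + x 1) ^ 2 ∨ 0 < (x 0 - x 1) ^ 2 := by
        by_contra h
        push_neg at h
        nlinarith [h.1, h.2]
      simp [hPi, Matrix.mulVec, dotProduct, Finsupp.sum_fintype, Fin.sum_univ_two]
      rcases hcase with h | h
      · nlinarith [mul_pos hDO h, mul_nonneg hB.le (sq_nonneg (x 0 - x 1))]
      · nlinarith [mul_pos hB h, mul_nonneg hDO.le (sq_nonneg (x 0 + x 1))]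
  · rw [hPi, hA]
    exact riccati_aux p γ hγ πD πO key1 key2'
end

section
/- Consider the discrete-time algebraic Riccati equation Π = Q + AᵀΠA − AᵀΠB(R + BᵀΠB)⁻¹BᵀΠA with A = I + Δt Ã, B = Δt I, Q = Δt I, R = Δt γ I (à fixed, γ > 0). Suppose Π_Δt solves this DARE for each Δt > 0 and Π_Δt → Π₀ as Δt → 0 with Π₀ positive semidefinite. Then Π₀ satisfies the continuous-time algebraic Riccati equation ÃᵀΠ₀ + Π₀Ã − (1/γ)Π₀² + I = 0. -/
open Matrix Filter Topology

lemma aux_expand {R : Type*} [Ring R] [Algebra ℝ R] (t : ℝ) (P X Y N : R) :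
    t • ((1:R) + X * P + P * Y + t • (X * P * Y) - (1 + t • X) * P * N * (P * (1 + t • Y)))
      = t • (1:R) + (1 + t • X) * P * (1 + t • Y) - P
        - t • ((1 + t • X) * P * N * (P * (1 + t • Y))) := by
  simp only [mul_add, add_mul, one_mul, mul_one, smul_mul_assoc, mul_smul_comm,
    smul_add, smul_sub, smul_smul]
  module

lemma aux_big {R : Type*} [Ring R] [Algebra ℝ R] (t : ℝ) (htne : t ≠ 0) (P N A1 A2 : R) :
    A1 * P * (t • (1:R)) * (t⁻¹ • N) * (t • (1:R)) * P * A2 = t • (A1 * P * N * (P * A2)) := by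
  simp only [smul_mul_assoc, mul_smul_comm, smul_smul, mul_one, one_mul]
  rw [show t * (t⁻¹ * t) = t by field_simp]
  congr 1
  noncomm_ring

theorem stmt5 (n : ℕ) (γ : ℝ) (hγ : 0 < γ)
    (Atil : Matrix (Fin n) (Fin n) ℝ)
    (Pi : ℝ → Matrix (Fin n) (Fin n) ℝ)
    (hDARE : ∀ Δt : ℝ, 0 < Δt →
      Pi Δt = Δt • (1 : Matrix (Fin n) (Fin n) ℝ) +
        (1 + Δt • Atil)ᵀ * Pi Δt * (1 + Δt • Atil) -
        (1 + Δt • Atil)ᵀ * Pi Δt * (Δt • (1 : Matrix (Fin n) (Fin n) ℝ)) *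
          ((Δt * γ) • (1 : Matrix (Fin n) (Fin n) ℝ) +
            (Δt • (1 : Matrix (Fin n) (Fin n) ℝ))ᵀ * Pi Δt *
              (Δt • (1 : Matrix (Fin n) (Fin n) ℝ)))⁻¹ *
          (Δt • (1 : Matrix (Fin n) (Fin n) ℝ))ᵀ * Pi Δt * (1 + Δt • Atil))
    (Pi0 : Matrix (Fin n) (Fin n) ℝ) (hpsd : Pi0.PosSemidef)
    (hconv : Tendsto Pi (nhdsWithin 0 (Set.Ioi 0)) (nhds Pi0)) :
    Atilᵀ * Pi0 + Pi0 * Atil - γ⁻¹ • (Pi0 * Pi0) + 1 = 0 := by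
  set l := nhdsWithin (0:ℝ) (Set.Ioi 0) with hl
  have ht0 : Tendsto (fun t : ℝ => t) l (nhds 0) :=
    tendsto_id.mono_left nhdsWithin_le_nhds
  have hMconv : Tendsto (fun t => γ • (1 : Matrix (Fin n) (Fin n) ℝ) + t • Pi t) l
      (nhds (γ • 1)) := by
    have : Tendsto (fun t => γ • (1 : Matrix (Fin n) (Fin n) ℝ) + t • Pi t) l
        (nhds (γ • 1 + (0:ℝ) • Pi0)) := tendsto_const_nhds.add (ht0.smul hconv)
    simpa using this
  have hdet : Tendsto (fun t => (γ • (1 : Matrix (Fin n) (Fin n) ℝ) + t • Pi t).det) l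
      (nhds ((γ • (1:Matrix (Fin n) (Fin n) ℝ)).det)) :=
    (Continuous.matrix_det continuous_id).continuousAt.tendsto.comp hMconv
  have hdetne : (γ • (1:Matrix (Fin n) (Fin n) ℝ)).det ≠ 0 := by
    simp [Matrix.det_smul, pow_ne_zero, hγ.ne']
  have hUnit : ∀ᶠ t in l, IsUnit (γ • (1 : Matrix (Fin n) (Fin n) ℝ) + t • Pi t).det := by
    filter_upwards [hdet.eventually_ne hdetne] with t ht using isUnit_iff_ne_zero.2 ht
  set f : ℝ → Matrix (Fin n) (Fin n) ℝ := fun t =>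
    (1 : Matrix (Fin n) (Fin n) ℝ) + Atilᵀ * Pi t + Pi t * Atil
      + t • (Atilᵀ * Pi t * Atil)
      - (1 + t • Atilᵀ) * Pi t * (γ • (1 : Matrix (Fin n) (Fin n) ℝ) + t • Pi t)⁻¹ *
          (Pi t * (1 + t • Atil)) with hf
  have hfe : ∀ᶠ t in l, f t = 0 := by
    filter_upwards [hUnit, self_mem_nhdsWithin] with t hu (ht : (0:ℝ) < t)
    have htne : t ≠ 0 := ht.ne'
    have hE := hDARE t ht
    have hS : (t * γ) • (1 : Matrix (Fin n) (Fin n) ℝ) +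
        (t • (1:Matrix (Fin n) (Fin n) ℝ))ᵀ * Pi t * (t • (1:Matrix (Fin n) (Fin n) ℝ)) =
        t • (γ • (1 : Matrix (Fin n) (Fin n) ℝ) + t • Pi t) := by
      simp only [Matrix.transpose_smul, Matrix.transpose_one, smul_mul_assoc,
        mul_smul_comm, mul_one, one_mul, smul_add, smul_smul]
    have hSinv : (t • (γ • (1 : Matrix (Fin n) (Fin n) ℝ) + t • Pi t))⁻¹ =
        t⁻¹ • (γ • (1 : Matrix (Fin n) (Fin n) ℝ) + t • Pi t)⁻¹ := by
      have := Matrix.inv_smul' (γ • (1 : Matrix (Fin n) (Fin n) ℝ) + t • Pi t)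
        (Units.mk0 t htne) hu
      simpa [Units.smul_def] using this
    rw [hS, hSinv, Matrix.transpose_add, Matrix.transpose_one, Matrix.transpose_smul,
      show (t • (1:Matrix (Fin n) (Fin n) ℝ))ᵀ = t • 1 by simp,
      aux_big t htne (Pi t) ((γ • (1 : Matrix (Fin n) (Fin n) ℝ) + t • Pi t)⁻¹)
        (1 + t • Atilᵀ) (1 + t • Atil)] at hE
    have hkey : t • f t = 0 := by
      rw [hf]
      simp only []
      rw [aux_expand t (Pi t) Atilᵀ Atil ((γ • (1 : Matrix (Fin n) (Fin n) ℝ) + t • Pi t)⁻¹)]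
      rw [sub_right_comm, sub_eq_zero]
      exact hE.symm
    rcases smul_eq_zero.mp hkey with h | h
    · exact absurd h htne
    · exact h
  have hInv : Tendsto (fun t => (γ • (1 : Matrix (Fin n) (Fin n) ℝ) + t • Pi t)⁻¹) l
      (nhds (γ • (1:Matrix (Fin n) (Fin n) ℝ))⁻¹) := by
    refine (continuousAt_matrix_inv _ ?_).tendsto.comp hMconv
    rw [Ring.inverse_eq_inv']
    exact continuousAt_inv₀ hdetne
  have hflim : Tendsto f l (nhds
      ((1 : Matrix (Fin n) (Fin n) ℝ) + Atilᵀ * Pi0 + Pi0 * Atil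
        + (0:ℝ) • (Atilᵀ * Pi0 * Atil)
        - (1 + (0:ℝ) • Atilᵀ) * Pi0 * (γ • (1:Matrix (Fin n) (Fin n) ℝ))⁻¹ *
            (Pi0 * (1 + (0:ℝ) • Atil)))) := by
    apply Tendsto.sub
    · exact ((tendsto_const_nhds.add (tendsto_const_nhds.mul hconv)).add
        (hconv.mul tendsto_const_nhds)).add
        (ht0.smul ((tendsto_const_nhds.mul hconv).mul tendsto_const_nhds))
    · exact (((tendsto_const_nhds.add (ht0.smul tendsto_const_nhds)).mul hconv).mul
        hInv).mul (hconv.mul (tendsto_const_nhds.add (ht0.smul tendsto_const_nhds)))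
  have hlim0 : Tendsto f l (nhds 0) := by
    refine Tendsto.congr' ?_ tendsto_const_nhds
    filter_upwards [hfe] with t ht using ht.symm
  have hne : (l : Filter ℝ).NeBot := nhdsGT_neBot 0
  have hL := tendsto_nhds_unique hflim hlim0
  have hginv : (γ • (1:Matrix (Fin n) (Fin n) ℝ))⁻¹ = γ⁻¹ • 1 := by
    have := Matrix.inv_smul' (1:Matrix (Fin n) (Fin n) ℝ) (Units.mk0 γ hγ.ne') (by simp)
    simpa [Units.smul_def] using this
  rw [hginv] at hL
  simp only [zero_smul, add_zero, zero_add, Matrix.one_mul, Matrix.mul_one,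
    smul_mul_assoc, mul_smul_comm, Matrix.smul_mul, Matrix.mul_smul] at hL
  rw [show Atilᵀ * Pi0 + Pi0 * Atil - γ⁻¹ • (Pi0 * Pi0) + 1 =
    1 + Atilᵀ * Pi0 + Pi0 * Atil - γ⁻¹ • (Pi0 * Pi0) from by abel]
  convert hL using 2
end
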